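/- Given a monic Hurwitz real polynomial a of degree n, the weak SPR region Ω^W_{1a} ⊂ ℝ^{n-1} is nonempty. -/

import Mathlib

open Polynomial

noncomputable def evalI (p : Polynomial ℝ) (ω : ℝ) : ℂ :=
  (p.map (algebraMap ℝ ℂ)).eval ((ω : ℂ) * Complex.I)

noncomputable def evalNegI (p : Polynomial ℝ) (ω : ℝ) : ℂ :=
  (p.map (algebraMap ℝ ℂ)).eval (-((ω : ℂ) * Complex.I))

def Hurwitz (p : Polynomial ℝ) : Prop :=
  ∀ z : ℂ, (p.map (algebraMap ℝ ℂ)).eval z = 0 → z.re < 0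

lemma multiset_sum_nonneg : ∀ s : Multiset ℝ, (∀ x ∈ s, 0 < x) → 0 ≤ s.sum := by
  intro s
  induction s using Multiset.induction_on with
  | empty => intro _; simp
  | cons a t ih =>
    intro hp
    have h1 : 0 < a := hp a (by simp)
    have h2 : 0 ≤ t.sum := ih (fun x hx => hp x (Multiset.mem_cons_of_mem hx))
    simp only [Multiset.sum_cons]
    linarith

lemma multiset_sum_pos : ∀ s : Multiset ℝ, s ≠ 0 → (∀ x ∈ s, 0 < x) → 0 < s.sum := by
  intro s
  induction s using Multiset.induction_on with
  | empty => intro h _; exact absurd rfl h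
  | cons a t _ =>
    intro _ hp
    have h1 : 0 < a := hp a (by simp)
    have h2 : 0 ≤ t.sum := multiset_sum_nonneg t (fun x hx => hp x (Multiset.mem_cons_of_mem hx))
    simp only [Multiset.sum_cons]
    linarith

/-- log-derivative of ∏ (X - r) as a sum. -/
lemma logderiv_prod (z : ℂ) : ∀ s : Multiset ℂ, (∀ r ∈ s, z - r ≠ 0) →
    (Polynomial.derivative (s.map (fun r => X - C r)).prod).eval z
      / ((s.map (fun r => X - C r)).prod).eval z
      = (s.map (fun r => 1 / (z - r))).sum := by
  intro s
  induction s using Multiset.induction_on with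
  | empty => intro _; simp
  | cons a t ih =>
    intro h
    have ha : z - a ≠ 0 := h a (by simp)
    have ht : ∀ r ∈ t, z - r ≠ 0 := fun r hr => h r (Multiset.mem_cons_of_mem hr)
    have hQ : ((t.map (fun r => X - C r)).prod).eval z ≠ 0 := by
      rw [Polynomial.eval_multiset_prod]
      apply Multiset.prod_ne_zero
      intro h0
      simp only [Multiset.mem_map] at h0
      obtain ⟨p, hp, hpz⟩ := h0
      obtain ⟨r, hr, rfl⟩ := hp
      simp only [eval_sub, eval_X, eval_C] at hpz
      exact ht r hr hpz
    have key : ((a ::ₘ t).map (fun r => X - C r)).prod = (X - C a) * (t.map (fun r => X - C r)).prod := by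
      simp
    rw [key, Polynomial.derivative_mul]
    simp only [Polynomial.eval_add, Polynomial.eval_mul, Polynomial.eval_sub,
      Polynomial.eval_X, Polynomial.eval_C, Polynomial.derivative_sub,
      Polynomial.derivative_X, Polynomial.derivative_C, sub_zero, Polynomial.eval_one,
      Multiset.map_cons, Multiset.sum_cons]
    rw [← ih ht]
    field_simp

/-- The weak SPR region Ω^W_{1a} is nonempty. (Here n = m + 1.) -/
theorem stmt14 (m : ℕ) (a : Polynomial ℝ) (ha : Hurwitz a)
    (hmona : a.Monic) (hdega : a.natDegree = m + 1) :
    ∃ x : Fin m → ℝ,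
      ∀ ω : ℝ,
        0 < (evalI (Polynomial.X ^ m +
              ∑ i : Fin m, Polynomial.C (x i) * Polynomial.X ^ (m - ((i : ℕ) + 1))) ω
            / evalI a ω).re := by
  classical
  set d := Polynomial.derivative a with hd
  have hmr : (0:ℝ) < (m:ℝ) + 1 := by positivity
  have hdm : d.coeff m = (m:ℝ) + 1 := by
    rw [hd, Polynomial.coeff_derivative]
    have : a.coeff (m + 1) = 1 := by
      have := hmona.coeff_natDegree
      rwa [hdega] at this
    rw [this, one_mul]
  have hdeg_d : d.natDegree ≤ m := by
    have := Polynomial.natDegree_derivative_le a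
    rw [hdega] at this
    exact this.trans (by omega)
  -- the witness
  refine ⟨fun i => d.coeff (m - ((i:ℕ) + 1)) / ((m:ℝ) + 1), ?_⟩
  -- polynomial identity: b = C (1/(m+1)) * d
  have hb : (Polynomial.X ^ m +
      ∑ i : Fin m, Polynomial.C (d.coeff (m - ((i:ℕ) + 1)) / ((m:ℝ) + 1)) *
        Polynomial.X ^ (m - ((i : ℕ) + 1)))
      = Polynomial.C (((m:ℝ) + 1)⁻¹) * d := by
    have hds : d = ∑ k ∈ Finset.range (m + 1), Polynomial.C (d.coeff k) * Polynomial.X ^ k := by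
      conv_lhs => rw [Polynomial.as_sum_range' d (m + 1) (lt_of_le_of_lt hdeg_d (Nat.lt_succ_self m))]
      simp [Polynomial.C_mul_X_pow_eq_monomial]
    conv_rhs => rw [hds]
    rw [Finset.mul_sum, Finset.sum_range_succ, hdm]
    have hlead : Polynomial.C (((m:ℝ) + 1)⁻¹) * (Polynomial.C ((m:ℝ) + 1) * Polynomial.X ^ m)
        = Polynomial.X ^ m := by
      rw [← mul_assoc, ← Polynomial.C_mul, inv_mul_cancel₀ (ne_of_gt hmr), Polynomial.C_1, one_mul]
    rw [hlead, add_comm]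
    congr 1
    rw [Fin.sum_univ_eq_sum_range (fun i => Polynomial.C (d.coeff (m - (i + 1)) / ((m:ℝ) + 1)) *
      Polynomial.X ^ (m - (i + 1)))]
    rw [← Finset.sum_range_reflect (fun k => Polynomial.C (((m:ℝ) + 1)⁻¹) *
      (Polynomial.C (d.coeff k) * Polynomial.X ^ k)) m]
    apply Finset.sum_congr rfl
    intro k hk
    have : m - (k + 1) = m - 1 - k := by omega
    rw [this, ← mul_assoc, ← Polynomial.C_mul, div_eq_inv_mul]
  rw [hb]
  intro ω
  set z : ℂ := (ω : ℂ) * Complex.I with hz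
  have hzre : z.re = 0 := by simp [hz]
  set A : Polynomial ℂ := a.map (algebraMap ℝ ℂ) with hA
  have hAmonic : A.Monic := hmona.map _
  have hAdeg : A.natDegree = m + 1 := by rw [hA, hmona.natDegree_map, hdega]
  have hroots_neg : ∀ r ∈ A.roots, r.re < 0 := by
    intro r hr
    exact ha r ((Polynomial.mem_roots (hAmonic.ne_zero)).mp hr)
  have hzr : ∀ r ∈ A.roots, z - r ≠ 0 := by
    intro r hr h0
    have h1 := hroots_neg r hr
    rw [sub_eq_zero] at h0
    rw [← h0, hzre] at h1
    exact lt_irrefl 0 h1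
  have hAprod : A = (A.roots.map (fun r => X - C r)).prod :=
    (IsAlgClosed.splits A).eq_prod_roots_of_monic hAmonic
  have hAz : A.eval z ≠ 0 := by
    intro h0
    have := ha z h0
    rw [hzre] at this
    exact lt_irrefl 0 this
  -- evalI computations
  have heval_b : evalI (Polynomial.C (((m:ℝ) + 1)⁻¹) * d) ω
      = (((m:ℝ) + 1)⁻¹ : ℝ) * (Polynomial.derivative A).eval z := by
    rw [evalI, Polynomial.map_mul, Polynomial.map_C, Polynomial.eval_mul, Polynomial.eval_C,
      hd, ← Polynomial.derivative_map]
    simp [hA, hz, Complex.ofReal_inv]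
  have heval_a : evalI a ω = A.eval z := rfl
  rw [heval_b, heval_a, mul_div_assoc]
  rw [Complex.re_ofReal_mul]
  apply mul_pos (by positivity)
  -- the log-derivative sum
  have hsum : (Polynomial.derivative A).eval z / A.eval z
      = (A.roots.map (fun r => 1 / (z - r))).sum := by
    conv_lhs => rw [hAprod]
    exact logderiv_prod z A.roots hzr
  rw [hsum]
  rw [show ((A.roots.map (fun r => 1 / (z - r))).sum).re
      = ((A.roots.map (fun r => 1 / (z - r))).map Complex.re).sum from
    map_multiset_sum Complex.reAddGroupHom _]
  rw [Multiset.map_map]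
  apply multiset_sum_pos
  · intro h0
    have hcard : Multiset.card A.roots = m + 1 := by
      have := Polynomial.splits_iff_card_roots.mp (IsAlgClosed.splits A)
      rw [hAdeg] at this
      exact this
    rw [Multiset.map_eq_zero.mp h0] at hcard
    simp at hcard
  · intro x hx
    obtain ⟨r, hr, rfl⟩ := Multiset.mem_map.mp hx
    simp only [Function.comp_apply, one_div]
    rw [Complex.inv_re]
    apply div_pos
    · rw [Complex.sub_re, hzre, zero_sub]
      linarith [hroots_neg r hr]
    · rw [Complex.normSq_pos]
      exact hzr r hr
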